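/- There are no solutions to p^r + p^s + 1 = z^2 in positive integers z, r, s with p an odd prime. -/

import Mathlib

/-- Descent: `x² - (w²+1)y² = ±2` has no integer solutions for `w ≥ 2`. -/
lemma no_pm2_aux (w : ℤ) (hw : 2 ≤ w) :
    ∀ n : ℕ, ∀ y x : ℤ, y.natAbs = n → 0 ≤ y → 0 ≤ x →
      (x ^ 2 - (w ^ 2 + 1) * y ^ 2 = 2 ∨ x ^ 2 - (w ^ 2 + 1) * y ^ 2 = -2) → False := by
  intro n
  induction n using Nat.strong_induction_on with
  | _ n ih =>
    intro y x hyn hy hx hnorm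
    rcases eq_or_lt_of_le hy with hy0 | hy1
    · -- y = 0
      obtain rfl : y = 0 := hy0.symm
      rcases hnorm with h | h
      · rcases le_or_gt x 1 with hx1 | hx2
        · nlinarith
        · nlinarith
      · nlinarith
    · -- y ≥ 1
      rcases eq_or_lt_of_le (show (1:ℤ) ≤ y by omega) with hy1' | hy2
      · -- y = 1
        obtain rfl : y = 1 := hy1'.symm
        rcases hnorm with h | h
        · rcases le_or_gt x w with hxw | hxw
          · nlinarith
          · nlinarith
        · rcases le_or_gt x (w - 1) with hxw | hxw
          · nlinarith
          · nlinarith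
      · -- y ≥ 2
        have hy2' : 2 ≤ y := hy2
        have hyw : 0 ≤ y * w := mul_nonneg hy (by linarith)
        have hysq : 4 ≤ y ^ 2 := by nlinarith
        -- x > y*w
        have hxyw : y * w < x := by
          have h1 : (y * w) ^ 2 < x ^ 2 := by
            rcases hnorm with h | h <;> nlinarith
          by_contra hcon
          push_neg at hcon
          have h2 : x ^ 2 ≤ (y * w) ^ 2 := pow_le_pow_left₀ hx hcon 2
          linarith
        set x' : ℤ := y * (w ^ 2 + 1) - x * w with hx'def
        set y' : ℤ := x - y * w with hy'def
        have hy'pos : 1 ≤ y' := by omega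
        have hy'lt : y' < y := by
          have h1 : x ^ 2 < (y * w + y) ^ 2 := by
            rcases hnorm with h | h <;> nlinarith
          have h2 : x < y * w + y := by
            by_contra hcon
            push_neg at hcon
            have h3 : (y * w + y) ^ 2 ≤ x ^ 2 := pow_le_pow_left₀ (by linarith) hcon 2
            linarith
          omega
        have hx'pos : 0 ≤ x' := by
          have h1 : (x * w) ^ 2 < (y * (w ^ 2 + 1)) ^ 2 := by
            rcases hnorm with h | h <;> nlinarith
          by_contra hcon
          push_neg at hcon
          have h0 : 0 ≤ y * (w ^ 2 + 1) := mul_nonneg hy (by positivity)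
          have h2 : (y * (w ^ 2 + 1)) ^ 2 < (x * w) ^ 2 := by
            have : y * (w ^ 2 + 1) < x * w := by omega
            exact pow_lt_pow_left₀ this h0 (by norm_num)
          linarith
        have key : x' ^ 2 - (w ^ 2 + 1) * y' ^ 2 = -(x ^ 2 - (w ^ 2 + 1) * y ^ 2) := by
          rw [hx'def, hy'def]; ring
        have hnorm' : x' ^ 2 - (w ^ 2 + 1) * y' ^ 2 = 2 ∨ x' ^ 2 - (w ^ 2 + 1) * y' ^ 2 = -2 := by
          rcases hnorm with h | h
          · right; rw [key, h]
          · left; rw [key, h]; norm_num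
        have hlt : y'.natAbs < n := by omega
        exact ih y'.natAbs hlt y' x' rfl (by omega) hx'pos hnorm'

lemma no_pm2 (w x y : ℤ) (hw : 2 ≤ w)
    (h : x ^ 2 - (w ^ 2 + 1) * y ^ 2 = 2 ∨ x ^ 2 - (w ^ 2 + 1) * y ^ 2 = -2) : False := by
  apply no_pm2_aux w hw y.natAbs |y| |x| (Int.natAbs_abs y) (abs_nonneg y) (abs_nonneg x)
  rcases h with h | h
  · left; rw [sq_abs, sq_abs]; exact h
  · right; rw [sq_abs, sq_abs]; exact h

/-- Hensel: lift the square root of `D ≡ 1 mod p` to any power of the odd prime `p`. -/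
lemma hensel_sqrt (p : ℕ) (hp : p.Prime) (hodd : Odd p) (D : ℤ) (hD : (p : ℤ) ∣ D - 1) :
    ∀ K : ℕ, ∃ S : ℤ, (p : ℤ) ∣ S - 1 ∧ (p : ℤ) ^ K ∣ S ^ 2 - D := by
  haveI : Fact p.Prime := ⟨hp⟩
  intro K
  induction K with
  | zero => exact ⟨1, by simp, by simp⟩
  | succ k ihk =>
    rcases k.eq_zero_or_pos with rfl | hk
    · refine ⟨1, by simp, ?_⟩
      simpa using (dvd_neg.mpr hD)
    obtain ⟨S, hS1, hSk⟩ := ihk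
    obtain ⟨c, hc⟩ := hSk
    have hS1' : ((S : ℤ) : ZMod p) = 1 := by
      have h0 : ((S - 1 : ℤ) : ZMod p) = 0 := (ZMod.intCast_zmod_eq_zero_iff_dvd _ _).mpr hS1
      push_cast at h0
      linear_combination h0
    have h2 : ((2 : ℤ) : ZMod p) ≠ 0 := by
      intro h
      have h2' : (p : ℤ) ∣ 2 := (ZMod.intCast_zmod_eq_zero_iff_dvd _ _).mp h
      have h2'' : p ∣ 2 := by exact_mod_cast h2'
      rcases (Nat.prime_two.eq_one_or_self_of_dvd p h2'') with h | h
      · exact hp.ne_one h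
      · rcases hodd with ⟨m, hm⟩; omega
    set u : ZMod p := (-(c : ℤ) : ZMod p) * ((2 : ℤ) : ZMod p)⁻¹ with hu
    set t : ℤ := (u.val : ℤ) with ht
    have huval : ((u.val : ℕ) : ZMod p) = u := by
      simp [ZMod.natCast_val, ZMod.cast_id]
    have h2inv : ((2 : ℤ) : ZMod p) * ((2 : ℤ) : ZMod p)⁻¹ = 1 := mul_inv_cancel₀ h2
    have hsolve : (p : ℤ) ∣ c + 2 * S * t := by
      rw [← ZMod.intCast_zmod_eq_zero_iff_dvd]
      have hgoal : ((c + 2 * S * t : ℤ) : ZMod p) = 0 := by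
        push_cast [ht]
        rw [hS1', huval, hu]
        push_cast at h2inv ⊢
        linear_combination (-(c : ZMod p)) * h2inv
      exact hgoal
    refine ⟨S + t * (p : ℤ) ^ k, ?_, ?_⟩
    · have hd : (p : ℤ) ∣ t * (p : ℤ) ^ k := Dvd.dvd.mul_left (dvd_pow_self _ (by omega)) t
      have hsum := dvd_add hS1 hd
      have heq : S - 1 + t * (p : ℤ) ^ k = S + t * (p : ℤ) ^ k - 1 := by ring
      rwa [heq] at hsum
    · have expand : (S + t * (p : ℤ) ^ k) ^ 2 - D
          = (p : ℤ) ^ k * (c + 2 * S * t) + t ^ 2 * ((p : ℤ) ^ k) ^ 2 := by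
        have h1 : (S + t * (p : ℤ) ^ k) ^ 2 - D
            = (S ^ 2 - D) + 2 * S * t * (p : ℤ) ^ k + t ^ 2 * ((p : ℤ) ^ k) ^ 2 := by ring
        rw [h1, hc]; ring
      rw [expand]
      apply dvd_add
      · rw [pow_succ]
        exact mul_dvd_mul_left _ hsolve
      · apply Dvd.dvd.mul_left
        rw [← pow_mul]
        exact pow_dvd_pow _ (by omega)

/-- A "clean" solution of `x² - D y² = ± p^c`. -/
def GoodRep (p : ℕ) (D S : ℤ) (c : ℕ) : Prop :=
  ∃ x y e : ℤ, (e = 1 ∨ e = -1) ∧ x ^ 2 - D * y ^ 2 = e * (p : ℤ) ^ c ∧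
    ¬ (p : ℤ) ∣ (x + y * S)

section Machinery

variable {p : ℕ} {D S : ℤ} {K : ℕ}

/-- L1: clean divisibility transfers to the conjugate factor. -/
lemma anti_dvd (hp : p.Prime) (hS : (p : ℤ) ^ K ∣ S ^ 2 - D) {x y : ℤ} {c : ℕ} (hcK : c ≤ K)
    (hdvd : (p : ℤ) ^ c ∣ x ^ 2 - D * y ^ 2) (hclean : ¬ (p : ℤ) ∣ (x + y * S)) :
    (p : ℤ) ^ c ∣ x - y * S := by
  have key : (x - y * S) * (x + y * S) = (x ^ 2 - D * y ^ 2) - (S ^ 2 - D) * y ^ 2 := by ring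
  have h1 : (p : ℤ) ^ c ∣ (x - y * S) * (x + y * S) := by
    rw [key]
    exact dvd_sub hdvd (((pow_dvd_pow _ hcK).trans hS).mul_right _)
  have hprime : Prime (p : ℤ) := Nat.prime_iff_prime_int.mp hp
  exact hprime.pow_dvd_of_dvd_mul_right c hclean h1

/-- L2: exactness of the conjugate valuation. -/
lemma anti_exact (hp : p.Prime) (hS : (p : ℤ) ^ K ∣ S ^ 2 - D) {x y e : ℤ} {c : ℕ}
    (hcK : c + 1 ≤ K) (he : e = 1 ∨ e = -1)
    (hnorm : x ^ 2 - D * y ^ 2 = e * (p : ℤ) ^ c) (hclean : ¬ (p : ℤ) ∣ (x + y * S)) :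
    ¬ (p : ℤ) ^ (c + 1) ∣ x - y * S := by
  intro hcon
  have key : e * (p : ℤ) ^ c = (x - y * S) * (x + y * S) + (S ^ 2 - D) * y ^ 2 := by
    rw [← hnorm]; ring
  have h1 : (p : ℤ) ^ (c + 1) ∣ e * (p : ℤ) ^ c := by
    rw [key]
    exact dvd_add (hcon.mul_right _) (((pow_dvd_pow _ hcK).trans hS).mul_right _)
  have h2 : (p : ℤ) ^ (c + 1) ∣ (p : ℤ) ^ c := by
    rcases he with rfl | rfl
    · simpa using h1
    · have := h1.neg_right
      simpa using this
  rw [pow_succ] at h2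
  have hp0 : ((p : ℤ)) ≠ 0 := by exact_mod_cast hp.pos.ne'
  have hpc : ((p : ℤ) ^ c) ≠ 0 := pow_ne_zero _ hp0
  have h3 : (p : ℤ) ∣ 1 := by
    have h2' : (p : ℤ) ^ c * (p : ℤ) ∣ (p : ℤ) ^ c * 1 := by simpa [mul_comm] using h2
    exact (mul_dvd_mul_iff_left hpc).mp h2'
  have := Int.le_of_dvd one_pos h3
  have hp2 : (2 : ℤ) ≤ (p : ℤ) := by exact_mod_cast hp.two_le
  linarith

/-- L3: multiplicativity. -/
lemma good_mul (hp : p.Prime) (hK1 : 1 ≤ K) (hS : (p : ℤ) ^ K ∣ S ^ 2 - D) {c₁ c₂ : ℕ}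
    (h₁ : GoodRep p D S c₁) (h₂ : GoodRep p D S c₂) : GoodRep p D S (c₁ + c₂) := by
  obtain ⟨x₁, y₁, e₁, he₁, hn₁, hc₁⟩ := h₁
  obtain ⟨x₂, y₂, e₂, he₂, hn₂, hc₂⟩ := h₂
  refine ⟨x₁ * x₂ + D * y₁ * y₂, x₁ * y₂ + y₁ * x₂, e₁ * e₂, ?_, ?_, ?_⟩
  · rcases he₁ with rfl | rfl <;> rcases he₂ with rfl | rfl <;> norm_num
  · have key : (x₁ * x₂ + D * y₁ * y₂) ^ 2 - D * (x₁ * y₂ + y₁ * x₂) ^ 2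
        = (x₁ ^ 2 - D * y₁ ^ 2) * (x₂ ^ 2 - D * y₂ ^ 2) := by ring
    rw [key, hn₁, hn₂, pow_add]; ring
  · intro hcon
    have hprime : Prime (p : ℤ) := Nat.prime_iff_prime_int.mp hp
    have hpS : (p : ℤ) ∣ S ^ 2 - D := by
      have : (p : ℤ) ^ 1 ∣ S ^ 2 - D := (pow_dvd_pow _ hK1).trans hS
      simpa using this
    have key : (x₁ + y₁ * S) * (x₂ + y₂ * S)
        = ((x₁ * x₂ + D * y₁ * y₂) + (x₁ * y₂ + y₁ * x₂) * S) + y₁ * y₂ * (S ^ 2 - D) := by ring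
    have h1 : (p : ℤ) ∣ (x₁ + y₁ * S) * (x₂ + y₂ * S) := by
      rw [key]
      exact dvd_add hcon (hpS.mul_left _)
    rcases hprime.dvd_mul.mp h1 with h | h
    · exact hc₁ h
    · exact hc₂ h

/-- L4: division step: from clean norms `±p^c₁`, `±p^c₂` with `c₂ ≤ c₁ < K`,
    get a clean norm `±p^(c₁ - c₂)`. -/
lemma good_sub (hp : p.Prime) (hS : (p : ℤ) ^ K ∣ S ^ 2 - D) {c₁ c₂ : ℕ}
    (hc21 : c₂ ≤ c₁) (hc1K : c₁ + 1 ≤ K)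
    (h₁ : GoodRep p D S c₁) (h₂ : GoodRep p D S c₂) : GoodRep p D S (c₁ - c₂) := by
  obtain ⟨x₁, y₁, e₁, he₁, hn₁, hcl₁⟩ := h₁
  obtain ⟨x₂, y₂, e₂, he₂, hn₂, hcl₂⟩ := h₂
  have hprime : Prime (p : ℤ) := Nat.prime_iff_prime_int.mp hp
  have hp0 : ((p : ℤ)) ≠ 0 := by exact_mod_cast hp.pos.ne'
  have hanti₁ : (p : ℤ) ^ c₁ ∣ x₁ - y₁ * S :=
    anti_dvd hp hS (by omega) ⟨e₁, by rw [hn₁]; ring⟩ hcl₁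
  have hanti₂ : (p : ℤ) ^ c₂ ∣ x₂ - y₂ * S :=
    anti_dvd hp hS (by omega) ⟨e₂, by rw [hn₂]; ring⟩ hcl₂
  have hanti₁' : (p : ℤ) ^ c₂ ∣ x₁ - y₁ * S := (pow_dvd_pow _ hc21).trans hanti₁
  have hSD2 : (p : ℤ) ^ c₂ ∣ S ^ 2 - D := (pow_dvd_pow _ (by omega)).trans hS
  have hSD2' : (p : ℤ) ^ (c₂ + 1) ∣ S ^ 2 - D := (pow_dvd_pow _ (by omega)).trans hS
  -- divisibility of both coordinates of ξ₁ * conj ξ₂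
  have hA : (p : ℤ) ^ c₂ ∣ x₁ * x₂ - D * y₁ * y₂ := by
    have key : x₁ * x₂ - D * y₁ * y₂
        = x₂ * (x₁ - y₁ * S) + y₁ * S * (x₂ - y₂ * S) + y₁ * y₂ * (S ^ 2 - D) := by ring
    rw [key]
    exact dvd_add (dvd_add (hanti₁'.mul_left _) (hanti₂.mul_left _)) (hSD2.mul_left _)
  have hB : (p : ℤ) ^ c₂ ∣ y₁ * x₂ - x₁ * y₂ := by
    have key : y₁ * x₂ - x₁ * y₂ = y₁ * (x₂ - y₂ * S) - y₂ * (x₁ - y₁ * S) := by ring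
    rw [key]
    exact dvd_sub (hanti₂.mul_left _) (hanti₁'.mul_left _)
  obtain ⟨x', hx'⟩ := hA
  obtain ⟨y', hy'⟩ := hB
  refine ⟨x', y', e₁ * e₂, ?_, ?_, ?_⟩
  · rcases he₁ with rfl | rfl <;> rcases he₂ with rfl | rfl <;> norm_num
  · -- norm computation
    have key : ((p : ℤ) ^ c₂ * x') ^ 2 - D * ((p : ℤ) ^ c₂ * y') ^ 2
        = (x₁ ^ 2 - D * y₁ ^ 2) * (x₂ ^ 2 - D * y₂ ^ 2) := by
      rw [← hx', ← hy']; ring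
    rw [hn₁, hn₂] at key
    have key2 : ((p : ℤ) ^ c₂) ^ 2 * (x' ^ 2 - D * y' ^ 2)
        = ((p : ℤ) ^ c₂) ^ 2 * (e₁ * e₂ * (p : ℤ) ^ (c₁ - c₂)) := by
      have hsplit : (p : ℤ) ^ c₁ = (p : ℤ) ^ (c₁ - c₂) * (p : ℤ) ^ c₂ := by
        rw [← pow_add]
        congr 1
        omega
      calc ((p : ℤ) ^ c₂) ^ 2 * (x' ^ 2 - D * y' ^ 2)
          = ((p : ℤ) ^ c₂ * x') ^ 2 - D * ((p : ℤ) ^ c₂ * y') ^ 2 := by ring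
        _ = e₁ * (p : ℤ) ^ c₁ * (e₂ * (p : ℤ) ^ c₂) := key
        _ = ((p : ℤ) ^ c₂) ^ 2 * (e₁ * e₂ * (p : ℤ) ^ (c₁ - c₂)) := by rw [hsplit]; ring
    exact mul_left_cancel₀ (pow_ne_zero _ (pow_ne_zero _ hp0)) key2
  · -- cleanness of the quotient
    intro hcon
    have hkey : (p : ℤ) ^ c₂ * (x' + y' * S)
        = (x₁ + y₁ * S) * (x₂ - y₂ * S) + y₁ * y₂ * (S ^ 2 - D) := by
      have h1 : (x₁ * x₂ - D * y₁ * y₂) + (y₁ * x₂ - x₁ * y₂) * S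
          = (p : ℤ) ^ c₂ * (x' + y' * S) := by
        rw [hx', hy']; ring
      rw [← h1]; ring
    have h2 : (p : ℤ) ^ (c₂ + 1) ∣ (x₁ + y₁ * S) * (x₂ - y₂ * S) := by
      have h3 : (x₁ + y₁ * S) * (x₂ - y₂ * S)
          = (p : ℤ) ^ c₂ * (x' + y' * S) - y₁ * y₂ * (S ^ 2 - D) := by
        rw [hkey]; ring
      rw [h3]
      refine dvd_sub ?_ (hSD2'.mul_left _)
      rw [pow_succ]
      exact mul_dvd_mul_left _ hcon
    have h4 : (p : ℤ) ^ (c₂ + 1) ∣ x₂ - y₂ * S :=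
      hprime.pow_dvd_of_dvd_mul_left (c₂ + 1) hcl₁ h2
    exact anti_exact hp hS (by omega) he₂ hn₂ hcl₂ h4


/-- L6: powers. -/
lemma good_pow (hp : p.Prime) (hK1 : 1 ≤ K) (hS : (p : ℤ) ^ K ∣ S ^ 2 - D) {c : ℕ}
    (h : GoodRep p D S c) : ∀ k : ℕ, 1 ≤ k → GoodRep p D S (k * c) := by
  intro k
  induction k with
  | zero => omega
  | succ k ih =>
    intro _
    rcases Nat.eq_zero_or_pos k with rfl | hk
    · simpa using h
    · have h1 : GoodRep p D S (k * c) := ih hk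
      have h2 := good_mul hp hK1 hS h1 h
      have : (k + 1) * c = k * c + c := by ring
      rwa [this]

/-- L5: gcd. -/
lemma good_gcd (hp : p.Prime) (hS : (p : ℤ) ^ K ∣ S ^ 2 - D) {B : ℕ} (hBK : B + 1 ≤ K) :
    ∀ N c₁ c₂ : ℕ, c₁ + c₂ ≤ N → c₁ ≤ B → c₂ ≤ B →
      GoodRep p D S c₁ → GoodRep p D S c₂ → GoodRep p D S (Nat.gcd c₁ c₂) := by
  intro N
  induction N using Nat.strong_induction_on with
  | _ N ih =>
    intro c₁ c₂ hsum hc₁B hc₂B h₁ h₂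
    rcases Nat.eq_zero_or_pos c₁ with rfl | hc₁
    · simpa [Nat.gcd_zero_left] using h₂
    rcases Nat.eq_zero_or_pos c₂ with rfl | hc₂
    · simpa [Nat.gcd_zero_right] using h₁
    rcases le_total c₂ c₁ with hle | hle
    · have hsub : GoodRep p D S (c₁ - c₂) := good_sub hp hS hle (by omega) h₁ h₂
      have hgcd : Nat.gcd c₁ c₂ = Nat.gcd (c₁ - c₂) c₂ := by
        rw [Nat.gcd_comm c₁ c₂, Nat.gcd_comm (c₁ - c₂) c₂]
        conv_lhs => rw [show c₁ = (c₁ - c₂) + c₂ by omega]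
        rw [Nat.gcd_add_self_right]
      rw [hgcd]
      exact ih c₁ (by omega) (c₁ - c₂) c₂ (by omega) (by omega) hc₂B hsub h₂
    · have hsub : GoodRep p D S (c₂ - c₁) := good_sub hp hS hle (by omega) h₂ h₁
      have hgcd : Nat.gcd c₁ c₂ = Nat.gcd (c₂ - c₁) c₁ := by
        rw [Nat.gcd_comm (c₂ - c₁) c₁]
        conv_lhs => rw [show c₂ = (c₂ - c₁) + c₁ by omega]
        rw [Nat.gcd_add_self_right]
      rw [hgcd]
      exact ih c₂ (by omega) (c₂ - c₁) c₁ (by omega) (by omega) hc₁B hsub h₁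


end Machinery

/-- Main case: `z² = p^(2α) + p^b + 1` with `α ≥ 1`, `b` odd is impossible. -/
lemma main_case (p : ℕ) (hp : p.Prime) (hodd : Odd p) (α b : ℕ) (hα : 1 ≤ α) (hbodd : Odd b)
    (z : ℤ) (hz : z ^ 2 = (p : ℤ) ^ (2 * α) + (p : ℤ) ^ b + 1) : False := by
  have hb1 : 1 ≤ b := hbodd.pos
  have hp3 : 3 ≤ (p : ℤ) := by
    have h2 := hp.two_le
    rcases hodd with ⟨m, hm⟩
    have : 3 ≤ p := by omega
    exact_mod_cast this
  have hP0 : ((p : ℤ)) ≠ 0 := by linarith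
  have hprime : Prime (p : ℤ) := Nat.prime_iff_prime_int.mp hp
  have hndvd2 : ¬ ((p : ℤ) ∣ 2) := fun h => by
    have := Int.le_of_dvd (by norm_num) h; linarith
  set w : ℤ := (p : ℤ) ^ α with hw
  have hw3 : 3 ≤ w := by
    calc (3 : ℤ) ≤ (p : ℤ) := hp3
    _ = (p : ℤ) ^ 1 := (pow_one _).symm
    _ ≤ (p : ℤ) ^ α := pow_le_pow_right₀ (by linarith) hα
  set D : ℤ := w ^ 2 + 1 with hD
  have hD2α : (p : ℤ) ^ (2 * α) = w ^ 2 := by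
    rw [hw, ← pow_mul, mul_comm]
  have hpw : (p : ℤ) ∣ w := by
    rw [hw]
    exact dvd_pow_self _ (by omega)
  have hD1 : (p : ℤ) ∣ D - 1 := by
    rw [hD]
    have : w ^ 2 + 1 - 1 = w * w := by ring
    rw [this]
    exact hpw.mul_right _
  set K : ℕ := b + 2 * α + 1 with hK
  obtain ⟨S, hS1, hSD⟩ := hensel_sqrt p hp hodd D hD1 K
  have hK1 : 1 ≤ K := by omega
  -- z² - D = p^b
  have hzD : z ^ 2 - D = (p : ℤ) ^ b := by rw [hz, hD, ← hD2α]; ring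
  -- z ≡ ±1 mod p
  have hz1 : (p : ℤ) ∣ (z - 1) * (z + 1) := by
    have h1 : (z - 1) * (z + 1) = (p : ℤ) ^ (2 * α) + (p : ℤ) ^ b := by
      have : (z - 1) * (z + 1) = z ^ 2 - 1 := by ring
      rw [this, hz]; ring
    rw [h1]
    exact dvd_add (dvd_pow_self _ (by omega)) (dvd_pow_self _ (by omega))
  -- Good b
  have hGoodb : GoodRep p D S b := by
    rcases hprime.dvd_mul.mp hz1 with hcase | hcase
    · refine ⟨z, 1, 1, Or.inl rfl, by rw [one_mul]; rw [← hzD]; ring, ?_⟩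
      intro hcon
      apply hndvd2
      have : (2 : ℤ) = (z + 1 * S) - (z - 1) - (S - 1) := by ring
      rw [this]
      exact dvd_sub (dvd_sub hcon hcase) hS1
    · refine ⟨z, -1, 1, Or.inl rfl, by rw [one_mul]; rw [← hzD]; ring, ?_⟩
      intro hcon
      apply hndvd2
      have : (2 : ℤ) = (z + 1) - (z + (-1) * S) - (S - 1) := by ring
      rw [this]
      exact dvd_sub (dvd_sub hcase hcon) hS1
  -- Good 2α
  have hGood2α : GoodRep p D S (2 * α) := by
    refine ⟨w ^ 2 + w + 1, w + 1, 1, Or.inl rfl, ?_, ?_⟩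
    · rw [one_mul, hD2α, hD]; ring
    · intro hcon
      apply hndvd2
      have : (2 : ℤ) = ((w ^ 2 + w + 1) + (w + 1) * S) - w * (w + 1 + S) - (S - 1) := by ring
      rw [this]
      refine dvd_sub (dvd_sub hcon (hpw.mul_right _)) hS1
  -- Good gcd
  set g : ℕ := Nat.gcd b (2 * α) with hg
  have hGoodg : GoodRep p D S g :=
    good_gcd hp hSD (B := b + 2 * α) (by omega) (b + 2 * α) b (2 * α)
      (le_refl _) (by omega) (by omega) hGoodb hGood2α
  have hg1 : 1 ≤ g := Nat.gcd_pos_of_pos_left _ (by omega)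
  have hgodd : Odd g := by
    obtain ⟨m, hm⟩ := Nat.gcd_dvd_left b (2 * α)
    rw [← hg] at hm
    rw [hm] at hbodd
    exact (Nat.odd_mul.mp hbodd).1
  have hgα : g ∣ α := by
    have h2α : g ∣ 2 * α := Nat.gcd_dvd_right b (2 * α)
    have hcop : Nat.Coprime g 2 := hgodd.coprime_two_right
    exact (Nat.Coprime.dvd_of_dvd_mul_left hcop h2α)
  -- Good α
  have hGoodα : GoodRep p D S α := by
    have h := good_pow hp hK1 hSD hGoodg (α / g) (Nat.one_le_div_iff (by omega) |>.mpr (Nat.le_of_dvd (by omega) hgα))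
    rwa [Nat.div_mul_cancel hgα] at h
  obtain ⟨X, Y, e, he, hnorm, hclean⟩ := hGoodα
  have hXa : (p : ℤ) ^ α ∣ X - Y * S :=
    anti_dvd hp hSD (by omega) ⟨e, by rw [hnorm]; ring⟩ hclean
  -- η = (w+1) + √D has norm 2w = 2p^α
  have hEtaNorm : (w + 1) ^ 2 - D * 1 ^ 2 = (p : ℤ) ^ α * 2 := by
    rw [hD, ← hw]; ring
  have hEtaClean : ¬ (p : ℤ) ∣ ((w + 1) + 1 * S) := by
    intro hcon
    apply hndvd2
    have : (2 : ℤ) = ((w + 1) + 1 * S) - w - (S - 1) := by ring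
    rw [this]
    exact dvd_sub (dvd_sub hcon hpw) hS1
  have hEta : (p : ℤ) ^ α ∣ (w + 1) - 1 * S :=
    anti_dvd hp hSD (by omega) ⟨2, hEtaNorm⟩ hEtaClean
  -- combine
  have hA : (p : ℤ) ^ α ∣ (w + 1) * X - D * Y := by
    have key : (w + 1) * X - D * Y
        = X * ((w + 1) - 1 * S) + S * (X - Y * S) + Y * (S ^ 2 - D) := by ring
    rw [key]
    refine dvd_add (dvd_add (hEta.mul_left _) (hXa.mul_left _)) ?_
    exact (((pow_dvd_pow _ (by omega : α ≤ K)).trans hSD).mul_left _)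
  have hB : (p : ℤ) ^ α ∣ X - (w + 1) * Y := by
    have key : X - (w + 1) * Y = (X - Y * S) - Y * ((w + 1) - 1 * S) := by ring
    rw [key]
    exact dvd_sub hXa (hEta.mul_left _)
  obtain ⟨x₀, hx₀⟩ := hA
  obtain ⟨y₀, hy₀⟩ := hB
  have hkey : ((p : ℤ) ^ α) ^ 2 * (x₀ ^ 2 - D * y₀ ^ 2)
      = ((p : ℤ) ^ α) ^ 2 * (2 * e) := by
    calc ((p : ℤ) ^ α) ^ 2 * (x₀ ^ 2 - D * y₀ ^ 2)
        = ((p : ℤ) ^ α * x₀) ^ 2 - D * ((p : ℤ) ^ α * y₀) ^ 2 := by ring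
      _ = ((w + 1) * X - D * Y) ^ 2 - D * (X - (w + 1) * Y) ^ 2 := by rw [← hx₀, ← hy₀]
      _ = ((w + 1) ^ 2 - D * 1 ^ 2) * (X ^ 2 - D * Y ^ 2) := by ring
      _ = ((p : ℤ) ^ α * 2) * (e * (p : ℤ) ^ α) := by rw [hEtaNorm, hnorm]
      _ = ((p : ℤ) ^ α) ^ 2 * (2 * e) := by ring
  have hfin : x₀ ^ 2 - D * y₀ ^ 2 = 2 * e :=
    mul_left_cancel₀ (pow_ne_zero _ (pow_ne_zero _ hP0)) hkey
  apply no_pm2 w x₀ y₀ (by linarith)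
  rw [← hD]
  rcases he with rfl | rfl
  · left; rw [hfin]; ring
  · right; rw [hfin]; ring

lemma pow_mod4_one (p : ℕ) (h1 : p % 4 = 1) (r : ℕ) : p ^ r % 4 = 1 := by
  induction r with
  | zero => rfl
  | succ r ih =>
    rw [pow_succ, Nat.mul_mod, ih, h1]

lemma pow_mod4_three (p : ℕ) (h3 : p % 4 = 3) (r : ℕ) :
    (p ^ r % 4 = 1 ∧ r % 2 = 0) ∨ (p ^ r % 4 = 3 ∧ r % 2 = 1) := by
  induction r with
  | zero => left; exact ⟨rfl, rfl⟩
  | succ r ih =>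
    rcases ih with ⟨h, hr⟩ | ⟨h, hr⟩
    · right
      constructor
      · rw [pow_succ, Nat.mul_mod, h, h3]
      · omega
    · left
      constructor
      · rw [pow_succ, Nat.mul_mod, h, h3]
      · omega

theorem luca_plus (p : ℕ) (hp : p.Prime) (hodd : Odd p) :
    ¬ ∃ z r s : ℕ, 0 < z ∧ 0 < r ∧ 0 < s ∧ p ^ r + p ^ s + 1 = z ^ 2 := by
  rintro ⟨z, r, s, hz, hr, hs, heq⟩
  have hp2 : p % 2 = 1 := Nat.odd_iff.mp hodd
  have hp4 : p % 4 = 1 ∨ p % 4 = 3 := by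
    have := Nat.mod_mod_of_dvd p (by norm_num : 2 ∣ 4)
    omega
  -- z is odd
  have hzodd : z % 2 = 1 := by
    have hzsq : (z ^ 2) % 2 = 1 := by
      rw [← heq]
      have h1 : p ^ r % 2 = 1 := by
        rw [Nat.pow_mod, hp2, Nat.one_pow]
      have h2 : p ^ s % 2 = 1 := by
        rw [Nat.pow_mod, hp2, Nat.one_pow]
      omega
    rcases Nat.even_or_odd z with he | ho
    · exfalso
      obtain ⟨k, hk⟩ := he
      subst hk
      have : (k + k) ^ 2 = 2 * (2 * k ^ 2) := by ring
      rw [this] at hzsq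
      omega
    · exact Nat.odd_iff.mp ho
  have hzsq4 : z ^ 2 % 4 = 1 := by
    have h4 : z % 4 = 1 ∨ z % 4 = 3 := by
      have := Nat.mod_mod_of_dvd z (by norm_num : 2 ∣ 4)
      omega
    rw [Nat.pow_mod]
    rcases h4 with h | h <;> rw [h] <;> rfl
  -- exponents have opposite parity
  have hparity : r % 2 ≠ s % 2 := by
    intro hcon
    have hmod : (p ^ r % 4 + p ^ s % 4 + 1) % 4 = 1 := by
      have : (p ^ r + p ^ s + 1) % 4 = z ^ 2 % 4 := by rw [heq]
      rw [hzsq4] at this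
      omega
    rcases hp4 with h1 | h3
    · rw [pow_mod4_one p h1 r, pow_mod4_one p h1 s] at hmod
      omega
    · rcases pow_mod4_three p h3 r with ⟨ha, hb⟩ | ⟨ha, hb⟩ <;>
        rcases pow_mod4_three p h3 s with ⟨hc, hd⟩ | ⟨hc, hd⟩ <;>
        rw [ha, hc] at hmod <;> omega
  -- cast to ℤ and split by which exponent is even
  have hcast : (z : ℤ) ^ 2 = (p : ℤ) ^ r + (p : ℤ) ^ s + 1 := by
    exact_mod_cast congrArg (Nat.cast : ℕ → ℤ) heq.symm
  rcases Nat.even_or_odd r with hre | hro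
  · -- r even, s odd
    obtain ⟨α, hα⟩ := hre
    have hα1 : 1 ≤ α := by omega
    have hsodd : Odd s := by
      rcases Nat.even_or_odd s with hse | hso
      · exfalso; apply hparity
        obtain ⟨β, hβ⟩ := hse
        omega
      · exact hso
    apply main_case p hp hodd α s hα1 hsodd z
    rw [hcast]
    congr 1
    congr 1
    congr 1
    omega
  · -- r odd, s even
    have hse : Even s := by
      rcases Nat.even_or_odd s with hse | hso
      · exact hse
      · exfalso; apply hparity
        rw [Nat.odd_iff.mp hro, Nat.odd_iff.mp hso]
    obtain ⟨α, hα⟩ := hse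
    have hα1 : 1 ≤ α := by omega
    apply main_case p hp hodd α r hα1 hro z
    rw [hcast]
    have h1 : (p : ℤ) ^ r + (p : ℤ) ^ s + 1 = (p : ℤ) ^ s + (p : ℤ) ^ r + 1 := by ring
    rw [h1]
    congr 1
    congr 1
    congr 1
    omega
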